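/- Let d ∈ {1, 2}, α > 0, δ ∈ (d/2, 1), and let f_λ(z) = (z^(1-d/2)/π^(d/2)) ∫₀^∞ J_{d/2-1}(rz) r^(d/2) (1 + (r/(αλ))^δ)^(-λ) dr. Then for any increasing sequence λ_n → ∞ of naturals and any m, n, sup_{z>0} |f_{λ_m}(z) - f_{λ_n}(z)| ≤ (Γ(d/δ)/(δ π^(d/2) 2^(d/2-1) Γ(d/2))) · |α^d λ_m^(d - d/δ) Γ(λ_m - d/δ)λ_m^{d/δ}/Γ(λ_m) − α^d λ_n^(d - d/δ) Γ(λ_n - d/δ)λ_n^{d/δ}/Γ(λ_n)| (bounding the difference of the Hankel transforms by the difference of the Beta-integral values). -/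

import Mathlib

open Real MeasureTheory Set Filter

/-- Bessel function of the first kind of real order `ν`, via its power series. -/
noncomputable def besselJ (ν x : ℝ) : ℝ :=
  ∑' k : ℕ, (-1) ^ k / (k.factorial * Real.Gamma ((k : ℝ) + ν + 1)) * (x / 2) ^ (2 * (k : ℝ) + ν)

/-- The Hankel-transform spectral density of the reparameterized Generalized Cauchy model. -/
noncomputable def cauchySD (d : ℕ) (α δ : ℝ) (lam : ℝ) (z : ℝ) : ℝ :=
  z ^ (1 - (d : ℝ) / 2) / π ^ ((d : ℝ) / 2) *
    ∫ r in Ioi (0:ℝ), besselJ ((d : ℝ) / 2 - 1) (r * z) * r ^ ((d : ℝ) / 2) *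
      (1 + (r / (α * lam)) ^ δ) ^ (-lam)

lemma besselJ_neg_half {x : ℝ} (hx : 0 < x) :
    besselJ (-(1/2)) x = (x/2) ^ (-(1/2) : ℝ) / Real.sqrt π * Real.cos x := by
  have hx2 : (0:ℝ) < x/2 := by linarith
  have hsπ : Real.sqrt π ≠ 0 := by positivity
  have hterm : ∀ k : ℕ,
      (-1) ^ k / (k.factorial * Real.Gamma ((k : ℝ) + (-(1/2)) + 1)) *
        (x / 2) ^ (2 * (k : ℝ) + (-(1/2)))
      = (x/2) ^ (-(1/2) : ℝ) / Real.sqrt π * ((-1) ^ k * x ^ (2*k) / (2*k).factorial) := by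
    intro k
    have h1 : (k : ℝ) + (-(1/2)) + 1 = (k : ℝ) + 1/2 := by ring
    have hdup := Real.Gamma_mul_Gamma_add_half ((k:ℝ) + 1/2)
    have e1 : (k:ℝ) + 1/2 + 1/2 = (k:ℝ) + 1 := by ring
    have e2 : 2 * ((k:ℝ) + 1/2) = ((2*k : ℕ) : ℝ) + 1 := by push_cast; ring
    have e3 : (1:ℝ) - (((2*k : ℕ) : ℝ) + 1) = -((2*k : ℕ) : ℝ) := by push_cast; ring
    rw [e1, e2, e3, Real.Gamma_nat_eq_factorial, Real.Gamma_nat_eq_factorial,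
      Real.rpow_neg (by norm_num), Real.rpow_natCast] at hdup
    -- hdup : Γ(k+1/2) * k! = (2k)! * (2^(2k))⁻¹ * √π
    have hG : Real.Gamma ((k:ℝ) + 1/2) * (k.factorial : ℝ)
        = ((2*k).factorial : ℝ) * ((2:ℝ)^(2*k))⁻¹ * Real.sqrt π := hdup
    have hpow : (x / 2) ^ (2 * (k : ℝ) + (-(1/2)))
        = (x/2) ^ (2*k) * (x/2) ^ (-(1/2) : ℝ) := by
      rw [show 2 * (k : ℝ) + (-(1/2)) = ((2*k : ℕ) : ℝ) + (-(1/2)) by push_cast; ring,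
        Real.rpow_add hx2, Real.rpow_natCast]
    have hxp : (x/2 : ℝ) ^ (2*k) * (2:ℝ)^(2*k) = x ^ (2*k) := by
      rw [← mul_pow]; norm_num
    rw [h1, hpow]
    have hf1 : ((2*k).factorial : ℝ) ≠ 0 := by positivity
    have hf2 : ((2:ℝ))^(2*k) ≠ 0 := by positivity
    have hf3 : (k.factorial : ℝ) ≠ 0 := by positivity
    have hGne : Real.Gamma ((k:ℝ) + 1/2) ≠ 0 :=
      ne_of_gt (Real.Gamma_pos_of_pos (by positivity))
    have hfac : (k.factorial : ℝ) * Real.Gamma ((k:ℝ)+1/2) * (2:ℝ)^(2*k)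
        = ((2*k).factorial : ℝ) * Real.sqrt π := by
      rw [mul_comm (k.factorial:ℝ) _, hG]; field_simp
    field_simp
    rw [show ((k:ℝ)*2+1)/2 = (k:ℝ)+1/2 by ring, ← hxp]
    linear_combination (-(x/2)^(2*k)) * hfac
  rw [besselJ]
  rw [tsum_congr hterm, tsum_mul_left, ← Real.cos_eq_tsum]

lemma beta_Ioo {p q : ℝ} (hp : 0 < p) (hq : 0 < q) :
    IntegrableOn (fun x : ℝ => x ^ (p-1) * (1-x) ^ (q-1)) (Ioo 0 1) volume ∧
    ∫ x in Ioo (0:ℝ) 1, x ^ (p-1) * (1-x) ^ (q-1)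
      = Real.Gamma p * Real.Gamma q / Real.Gamma (p+q) := by
  set F : ℝ → ℂ := fun x => (x:ℂ)^((p:ℂ)-1) * (1-(x:ℂ))^((q:ℂ)-1) with hFdef
  have hrep : ∀ x ∈ Ioo (0:ℝ) 1, F x = ((x ^ (p-1) * (1-x) ^ (q-1) : ℝ) : ℂ) := by
    intro x hx
    have h1 : (0:ℝ) ≤ x := le_of_lt hx.1
    have h2 : (0:ℝ) ≤ 1 - x := by linarith [hx.2]
    simp only [hFdef, Complex.ofReal_mul, Complex.ofReal_cpow h1, Complex.ofReal_cpow h2,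
      Complex.ofReal_sub, Complex.ofReal_one]
  have hconv : IntervalIntegrable F volume 0 1 := by
    have := Complex.betaIntegral_convergent (u := (p:ℂ)) (v := (q:ℂ)) (by simpa using hp)
      (by simpa using hq)
    simpa [hFdef] using this
  have hFioo : IntegrableOn F (Ioo 0 1) volume := by
    have : IntegrableOn F (Ioc 0 1) volume := by
      rwa [intervalIntegrable_iff_integrableOn_Ioc_of_le (by norm_num)] at hconv
    exact this.mono_set Ioo_subset_Ioc_self
  have hre : IntegrableOn (fun x : ℝ => x ^ (p-1) * (1-x) ^ (q-1)) (Ioo 0 1) volume := by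
    have h : IntegrableOn (fun x => RCLike.re (F x)) (Ioo (0:ℝ) 1) volume := hFioo.re
    refine h.congr_fun ?_ measurableSet_Ioo
    intro x hx
    simp [hrep x hx, RCLike.re_to_complex]
  refine ⟨hre, ?_⟩
  have hval : ∫ x in Ioo (0:ℝ) 1, F x
      = ((Real.Gamma p * Real.Gamma q / Real.Gamma (p+q) : ℝ) : ℂ) := by
    have h1 : ∫ x in Ioo (0:ℝ) 1, F x = ∫ x in (0:ℝ)..1, F x := by
      rw [intervalIntegral.integral_of_le (by norm_num), integral_Ioc_eq_integral_Ioo]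
    have h2 : Complex.betaIntegral p q
        = Complex.Gamma p * Complex.Gamma q / Complex.Gamma ((p:ℂ)+(q:ℂ)) := by
      have hne : Complex.Gamma ((p:ℂ)+(q:ℂ)) ≠ 0 := by
        apply Complex.Gamma_ne_zero
        intro m h
        have : (p + q : ℝ) = -(m:ℝ) := by exact_mod_cast (by push_cast at h ⊢; exact_mod_cast h)
        nlinarith [Nat.cast_nonneg (α := ℝ) m]
      have := Complex.Gamma_mul_Gamma_eq_betaIntegral (s := (p:ℂ)) (t := (q:ℂ))
        (by simpa using hp) (by simpa using hq)
      rw [eq_div_iff hne]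
      linear_combination -this
    rw [h1]
    have h3 : ∫ x in (0:ℝ)..1, F x = Complex.betaIntegral p q := rfl
    rw [h3, h2, show ((p:ℂ)+(q:ℂ)) = ((p+q:ℝ):ℂ) by push_cast; ring]
    rw [Complex.Gamma_ofReal, Complex.Gamma_ofReal, Complex.Gamma_ofReal]
    push_cast
    ring
  have := integral_re (μ := volume.restrict (Ioo (0:ℝ) 1)) (f := F) hFioo
  rw [hval] at this
  simp only [RCLike.re_to_complex, Complex.ofReal_re] at this
  rw [← this]
  exact setIntegral_congr_fun measurableSet_Ioo (fun x hx => by simp [hrep x hx])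

lemma G_int {c δ lam : ℝ} (hc : 0 < c) (hδ0 : 0 < δ) (hlam : 1/δ < lam) :
    IntegrableOn (fun r : ℝ => (1 + (r/c)^δ)^(-lam)) (Ioi 0) volume ∧
    ∫ r in Ioi (0:ℝ), (1 + (r/c)^δ)^(-lam)
      = c/δ * (Real.Gamma (1/δ) * Real.Gamma (lam - 1/δ) / Real.Gamma lam) := by
  have hδ0' : δ ≠ 0 := ne_of_gt hδ0
  set s : Set ℝ := Ioo 0 1 with hs
  set ψ : ℝ → ℝ := fun x => x / (1 - x) with hψdef
  set φ : ℝ → ℝ := fun x => c * ψ x ^ (1/δ) with hφdef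
  set φ' : ℝ → ℝ := fun x => c * (1/δ * ψ x ^ (1/δ - 1) * (1/(1-x)^2)) with hφ'def
  have hψpos : ∀ x ∈ s, 0 < ψ x := fun x hx => div_pos hx.1 (by linarith [hx.2])
  have hψd : ∀ x ∈ s, HasDerivAt ψ (1/(1-x)^2) x := by
    intro x hx
    have h1x : (1:ℝ) - x ≠ 0 := by have := hx.2; intro h; simp only [hs, mem_Ioo] at hx; linarith
    have h := (hasDerivAt_id x).div ((hasDerivAt_const x (1:ℝ)).sub (hasDerivAt_id x)) h1x
    exact h.congr_deriv (by simp only [Pi.sub_apply, id]; ring)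
  have hφd : ∀ x ∈ s, HasDerivAt φ (φ' x) x := by
    intro x hx
    have h := ((Real.hasDerivAt_rpow_const (x := ψ x) (p := 1/δ)
      (Or.inl (ne_of_gt (hψpos x hx)))).comp x (hψd x hx)).const_mul c
    exact h
  have hmono : StrictMonoOn φ s := by
    intro x hx y hy hxy
    have h1 : ψ x < ψ y := by
      simp only [hs, mem_Ioo] at hx hy
      rw [hψdef]
      rw [div_lt_div_iff₀ (by linarith) (by linarith)]
      nlinarith
    have h2 : ψ x ^ (1/δ) < ψ y ^ (1/δ) :=
      Real.rpow_lt_rpow (le_of_lt (hψpos x hx)) h1 (by positivity)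
    exact mul_lt_mul_of_pos_left h2 hc
  have himg : φ '' s = Ioi 0 := by
    apply Subset.antisymm
    · rintro _ ⟨x, hx, rfl⟩
      exact mem_Ioi.2 (mul_pos hc (Real.rpow_pos_of_pos (hψpos x hx) _))
    · intro r hr
      rw [mem_Ioi] at hr
      set u := (r/c)^δ with hu'
      have hu : 0 < u := Real.rpow_pos_of_pos (div_pos hr hc) δ
      refine ⟨u/(1+u), ⟨div_pos hu (by linarith), (div_lt_one (by linarith)).2 (by linarith)⟩, ?_⟩
      have hψu : ψ (u/(1+u)) = u := by
        rw [hψdef]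
        have h1u : (1:ℝ) + u ≠ 0 := by linarith
        field_simp
        ring
      rw [hφdef]
      simp only
      rw [hψu, hu', one_div, Real.rpow_rpow_inv (le_of_lt (div_pos hr hc)) hδ0']
      field_simp
  have hcomp : ∀ x ∈ s, |φ' x| • (fun r => (1 + (r/c)^δ)^(-lam)) (φ x)
      = c/δ * (x ^ (1/δ - 1) * (1-x) ^ ((lam - 1/δ) - 1)) := by
    intro x hx
    have hx' := hx
    simp only [hs, mem_Ioo] at hx'
    obtain ⟨hx0, hx1⟩ := hx'
    have h1x : (0:ℝ) < 1 - x := by linarith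
    have hψx := hψpos x hx
    have h2 : (φ x / c)^δ = ψ x := by
      rw [hφdef]
      simp only
      rw [mul_div_cancel_left₀ _ (ne_of_gt hc), one_div,
        Real.rpow_inv_rpow (le_of_lt hψx) hδ0']
    have h3 : (1 : ℝ) + ψ x = (1-x)⁻¹ := by
      rw [hψdef]
      field_simp
      ring
    have h4 : (((1-x)⁻¹ : ℝ)) ^ (-lam) = (1-x) ^ lam := by
      rw [Real.inv_rpow (le_of_lt h1x), Real.rpow_neg (le_of_lt h1x), inv_inv]
    have habs : |φ' x| = φ' x := by
      apply abs_of_pos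
      rw [hφ'def]
      have := Real.rpow_pos_of_pos hψx (1/δ - 1)
      positivity
    rw [smul_eq_mul, habs]
    simp only
    rw [h2, h3, h4, hφ'def]
    simp only [hψdef]
    rw [Real.div_rpow (le_of_lt hx0) (le_of_lt h1x)]
    have hsplit : ((1-x):ℝ) ^ lam
        = (1-x) ^ (1/δ - 1) * ((1-x)^(2:ℕ)) * (1-x) ^ (lam - 1/δ - 1) := by
      rw [← Real.rpow_natCast (1-x) 2, ← Real.rpow_add h1x, ← Real.rpow_add h1x]
      congr 1
      push_cast
      ring
    rw [hsplit]
    have hne1 : ((1-x):ℝ) ^ (1/δ - 1) ≠ 0 := ne_of_gt (Real.rpow_pos_of_pos h1x _)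
    have hne2 : ((1-x):ℝ)^(2:ℕ) ≠ 0 := by positivity
    field_simp
  have hderivW : ∀ x ∈ s, HasDerivWithinAt φ (φ' x) s x := fun x hx => (hφd x hx).hasDerivWithinAt
  have hinj : InjOn φ s := hmono.injOn
  have hbeta := beta_Ioo (p := 1/δ) (q := lam - 1/δ) (by positivity) (by linarith)
  have hbint : IntegrableOn (fun x => |φ' x| • (fun r => (1 + (r/c)^δ)^(-lam)) (φ x)) s volume := by
    have hb : IntegrableOn (fun x : ℝ => c/δ * (x ^ (1/δ - 1) * (1-x) ^ ((lam - 1/δ) - 1)))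
        s volume := hbeta.1.const_mul (c/δ)
    refine hb.congr_fun ?_ measurableSet_Ioo
    intro x hx
    exact (hcomp x hx).symm
  constructor
  · have hiff := integrableOn_image_iff_integrableOn_abs_deriv_smul measurableSet_Ioo hderivW hinj
      (fun r => (1 + (r/c)^δ)^(-lam))
    rw [himg] at hiff
    exact hiff.mpr hbint
  · have hval := integral_image_eq_integral_abs_deriv_smul measurableSet_Ioo hderivW hinj
      (fun r => (1 + (r/c)^δ)^(-lam))
    rw [himg] at hval
    rw [hval, setIntegral_congr_fun measurableSet_Ioo hcomp, MeasureTheory.integral_const_mul,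
      hbeta.2, show 1/δ + (lam - 1/δ) = lam by ring]

lemma log_one_add_ge {u : ℝ} (hu : 0 ≤ u) : u / (1 + u) ≤ Real.log (1 + u) := by
  have h1u : (0:ℝ) < 1 + u := by linarith
  have h := Real.log_le_sub_one_of_pos (x := (1+u)⁻¹) (by positivity)
  rw [Real.log_inv] at h
  have : Real.log (1+u) ≥ 1 - (1+u)⁻¹ := by linarith
  have heq : u / (1+u) = 1 - (1+u)⁻¹ := by field_simp; ring
  linarith [heq ▸ this]

lemma F_mono {c δ : ℝ} (hc : 0 < c) (hδ0 : 0 < δ) (hδ1 : δ ≤ 1) :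
    MonotoneOn (fun t : ℝ => t * Real.log (1 + c * t^(-δ))) (Ioi 0) := by
  have hu : ∀ t : ℝ, 0 < t → 0 < c * t^(-δ) :=
    fun t ht => mul_pos hc (Real.rpow_pos_of_pos ht _)
  have hF' : ∀ t ∈ Ioi (0:ℝ), HasDerivAt (fun t : ℝ => t * Real.log (1 + c * t^(-δ)))
      (1 * Real.log (1 + c * t^(-δ)) +
        t * ((c * (-δ * t^(-δ-1))) / (1 + c * t^(-δ)))) t := by
    intro t ht
    rw [mem_Ioi] at ht
    have h1 : HasDerivAt (fun t : ℝ => t ^ (-δ)) (-δ * t^(-δ-1)) t :=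
      Real.hasDerivAt_rpow_const (Or.inl (ne_of_gt ht))
    have h2 : HasDerivAt (fun t : ℝ => 1 + c * t^(-δ)) (c * (-δ * t^(-δ-1))) t := by
      exact ((hasDerivAt_const t (1:ℝ)).add (h1.const_mul c)).congr_deriv (by ring)
    have h3 : HasDerivAt (fun t : ℝ => Real.log (1 + c * t^(-δ)))
        ((c * (-δ * t^(-δ-1))) / (1 + c * t^(-δ))) t :=
      h2.log (by have := hu t ht; intro h; linarith)
    exact (hasDerivAt_id t).mul h3
  apply monotoneOn_of_deriv_nonneg (convex_Ioi 0)
  · exact fun t ht => ((hF' t ht).differentiableAt).continuousAt.continuousWithinAt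
  · intro t ht
    rw [interior_Ioi] at ht
    exact ((hF' t ht).differentiableAt).differentiableWithinAt
  · intro t ht
    rw [interior_Ioi] at ht
    rw [(hF' t ht).deriv]
    have ht' : (0:ℝ) < t := ht
    set u := c * t^(-δ) with hudef
    have hu' : 0 < u := hu t ht'
    have h1u : (0:ℝ) < 1 + u := by linarith
    have hkey : t * ((c * (-δ * t^(-δ-1))) / (1 + u)) = -(δ * u) / (1 + u) := by
      rw [← mul_div_assoc]
      congr 1
      have htt : t ^ (1:ℝ) * t^(-δ-1) = t^(-δ) := by
        rw [← Real.rpow_add ht']; norm_num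
      rw [hudef]
      calc t * (c * (-δ * t^(-δ-1))) = -(δ * (c * (t^(1:ℝ) * t^(-δ-1)))) := by
            rw [Real.rpow_one]; ring
        _ = -(δ * (c * t^(-δ))) := by rw [htt]
    rw [hkey]
    have hlog := log_one_add_ge (le_of_lt hu')
    have hfrac : δ * u / (1 + u) ≤ u / (1 + u) := by
      gcongr
      nlinarith
    rw [neg_div]
    linarith

lemma G_mono {α δ : ℝ} (hα : 0 < α) (hδ0 : 0 < δ) (hδ1 : δ ≤ 1) {r : ℝ} (hr : 0 < r)
    {a b : ℝ} (ha : 0 < a) (hab : a ≤ b) :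
    (1 + (r/(α*b))^δ)^(-b) ≤ (1 + (r/(α*a))^δ)^(-a) := by
  have hb : 0 < b := lt_of_lt_of_le ha hab
  set c : ℝ := (r/α)^δ with hcdef
  have hc : 0 < c := Real.rpow_pos_of_pos (div_pos hr hα) _
  have hrw : ∀ t : ℝ, 0 < t → (r/(α*t))^δ = c * t^(-δ) := by
    intro t ht
    rw [hcdef, show r/(α*t) = (r/α) * t⁻¹ by field_simp,
      Real.mul_rpow (by positivity) (by positivity),
      Real.inv_rpow (le_of_lt ht), ← Real.rpow_neg (le_of_lt ht)]
  have hF := F_mono hc hδ0 hδ1 (mem_Ioi.2 ha) (mem_Ioi.2 hb) hab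
  have hexp : ∀ t : ℝ, 0 < t → (1 + (r/(α*t))^δ)^(-t)
      = Real.exp (-(t * Real.log (1 + c * t^(-δ)))) := by
    intro t ht
    rw [hrw t ht, Real.rpow_def_of_pos (by positivity : (0:ℝ) < 1 + c * t^(-δ))]
    ring_nf
  simp only at hF
  rw [hexp a ha, hexp b hb]
  exact Real.exp_le_exp.2 (by linarith)

lemma not_int_cos {z δ c : ℝ} (hz : 0 < z) (hδ0 : 0 < δ) (hδ1 : δ < 1) (hc : 0 < c)
    (g : ℝ → ℝ) (hg : ∀ r ∈ Ioi (0:ℝ), c * (1+r)^(-δ) ≤ g r) :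
    ¬ IntegrableOn (fun r => Real.cos (r*z) * g r) (Ioi 0) volume := by
  intro hint
  have habs : IntegrableOn (fun r => |Real.cos (r*z) * g r|) (Ioi 0) volume := hint.abs
  set b : ℕ → ℝ := fun k => (2*π*k + π/4)/z with hb
  set I : ℕ → Set ℝ := fun k => Ioo (2*π*k/z) (b k) with hI
  have hIsub : ∀ k, I k ⊆ Ioi (0:ℝ) := by
    intro k r hr
    have h0 : (0:ℝ) ≤ 2*π*k/z := by positivity
    exact lt_of_le_of_lt h0 hr.1
  have hlow : ∀ k, ∀ r ∈ I k, Real.sqrt 2 / 2 * (c * (1 + b k)^(-δ))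
      ≤ |Real.cos (r*z) * g r| := by
    intro k r hr
    obtain ⟨hr1, hr2⟩ := hr
    have hrpos : 0 < r := hIsub k ⟨hr1, hr2⟩
    have hrz1 : 2*π*k < r*z := by
      rw [div_lt_iff₀ hz] at hr1; linarith [hr1]
    have hrz2 : r*z < 2*π*k + π/4 := by
      rw [hb] at hr2; simp only at hr2
      rw [lt_div_iff₀ hz] at hr2; linarith [hr2]
    have hcos : Real.sqrt 2 / 2 ≤ Real.cos (r*z) := by
      have hper := Real.cos_add_nat_mul_two_pi (r*z - 2*π*k) k
      rw [show r*z - 2*π*(k:ℝ) + (k:ℕ)*(2*π) = r*z by push_cast; ring] at hper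
      rw [hper, ← Real.cos_pi_div_four]
      apply Real.cos_le_cos_of_nonneg_of_le_pi (by linarith) (by linarith [Real.pi_pos])
        (by linarith)
    have hgb : c * (1 + b k)^(-δ) ≤ g r := by
      refine le_trans ?_ (hg r hrpos)
      have : (1 + b k)^(-δ) ≤ (1 + r)^(-δ) :=
        Real.rpow_le_rpow_of_nonpos (by linarith) (by linarith [le_of_lt hr2])
          (by linarith)
      nlinarith
    have hgpos : 0 ≤ c * (1 + b k)^(-δ) := by positivity
    refine le_trans ?_ (le_abs_self _)
    have h2 : (0:ℝ) < Real.sqrt 2 / 2 := by positivity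
    calc Real.sqrt 2 / 2 * (c * (1 + b k)^(-δ))
        ≤ Real.cos (r*z) * (c * (1 + b k)^(-δ)) := by nlinarith
      _ ≤ Real.cos (r*z) * g r := by nlinarith
  have hIvol : ∀ k, volume (I k) = ENNReal.ofReal (π/4/z) := by
    intro k
    rw [hI]; simp only [Real.volume_Ioo]
    congr 1
    rw [hb]; ring
  have hIint : ∀ k, ∫ r in I k, |Real.cos (r*z) * g r|
      ≥ (π/4/z) * (Real.sqrt 2 / 2 * (c * (1 + b k)^(-δ))) := by
    intro k
    have h1 : IntegrableOn (fun r => |Real.cos (r*z) * g r|) (I k) volume :=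
      habs.mono_set (hIsub k)
    have h2 : IntegrableOn (fun _ : ℝ => Real.sqrt 2 / 2 * (c * (1 + b k)^(-δ)))
        (I k) volume := by
      refine (integrableOn_const_iff enorm_ne_top).2 (Or.inr ?_)
      rw [hIvol k]; exact ENNReal.ofReal_lt_top
    have h3 := setIntegral_mono_on h2 h1 measurableSet_Ioo (hlow k)
    rwa [setIntegral_const, measureReal_def, hIvol k, ENNReal.toReal_ofReal (by positivity),
      smul_eq_mul] at h3
  -- partial sums bounded
  set A := ∫ r in Ioi (0:ℝ), |Real.cos (r*z) * g r| with hA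
  have hpart : ∀ K : ℕ, ∑ k ∈ Finset.range K,
      (π/4/z) * (Real.sqrt 2 / 2 * (c * (1 + b k)^(-δ))) ≤ A := by
    intro K
    have hdisj0 : ∀ i j : ℕ, i < j → Disjoint (I i) (I j) := by
      intro i j hlt
      have hij1 : (i:ℝ) + 1 ≤ (j:ℝ) := by exact_mod_cast hlt
      have hnum : 2*π*(i:ℝ) + π/4 ≤ 2*π*(j:ℝ) := by nlinarith [Real.pi_pos]
      have hle : b i ≤ 2*π*(j:ℝ)/z := by
        rw [hb]
        exact (div_le_div_iff_of_pos_right hz).2 hnum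
      simp only [hI]
      refine Set.disjoint_left.2 ?_
      rintro x ⟨_, hx2⟩ ⟨hx3, _⟩
      linarith
    have hdisj : (↑(Finset.range K) : Set ℕ).Pairwise (Function.onFun Disjoint I) := by
      intro i _ j _ hij
      rcases hij.lt_or_gt with h | h
      · exact hdisj0 i j h
      · exact (hdisj0 j i h).symm
    have hmeas : ∀ i ∈ Finset.range K, MeasurableSet (I i) := fun i _ => measurableSet_Ioo
    have hints : ∀ i ∈ Finset.range K,
        IntegrableOn (fun r => |Real.cos (r*z) * g r|) (I i) volume :=
      fun i _ => habs.mono_set (hIsub i)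
    have hun := MeasureTheory.integral_biUnion_finset (Finset.range K) hmeas hdisj hints
    have hsub2 : (⋃ i ∈ Finset.range K, I i) ⊆ Ioi (0:ℝ) := by
      intro r hr
      simp only [mem_iUnion] at hr
      obtain ⟨i, _, hri⟩ := hr
      exact hIsub i hri
    have hmono := setIntegral_mono_set habs
      (Filter.Eventually.of_forall (fun r => abs_nonneg _)) (hsub2.eventuallyLE)
    rw [hun] at hmono
    calc ∑ k ∈ Finset.range K, (π/4/z) * (Real.sqrt 2 / 2 * (c * (1 + b k)^(-δ)))
        ≤ ∑ k ∈ Finset.range K, ∫ r in I k, |Real.cos (r*z) * g r| :=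
          Finset.sum_le_sum (fun k _ => hIint k)
      _ ≤ A := hmono
  -- summability
  have hC : 0 < (π/4/z) * (Real.sqrt 2 / 2) * c := by positivity
  have hsum : Summable (fun k : ℕ => (1 + b k)^(-δ)) := by
    apply summable_of_sum_range_le (c := A / ((π/4/z) * (Real.sqrt 2 / 2) * c))
    · intro n; positivity
    · intro K
      rw [le_div_iff₀ hC]
      calc (∑ k ∈ Finset.range K, (1 + b k)^(-δ)) * ((π/4/z) * (Real.sqrt 2 / 2) * c)
          = ∑ k ∈ Finset.range K, (π/4/z) * (Real.sqrt 2 / 2 * (c * (1 + b k)^(-δ))) := by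
            rw [Finset.sum_mul]; congr 1; ext k; ring
        _ ≤ A := hpart K
  -- contradiction
  set M : ℝ := 1 + (2*π + π/4)/z with hM
  have hM1 : (1:ℝ) ≤ M := by
    rw [hM]
    have : 0 ≤ (2*π + π/4)/z := by positivity
    linarith
  have hM0 : (0:ℝ) < M := by linarith
  have hbound : ∀ k : ℕ, ((k:ℝ)+1)^(-δ) ≤ M^δ * (1 + b k)^(-δ) := by
    intro k
    have hbk : 1 + b k ≤ M * ((k:ℝ)+1) := by
      rw [hM, hb]
      have hk : (0:ℝ) ≤ (k:ℝ) := Nat.cast_nonneg k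
      have h1 : 2*π*(k:ℝ) + π/4 ≤ (2*π + π/4)*((k:ℝ)+1) := by nlinarith [Real.pi_pos]
      have h2 : (2*π*(k:ℝ) + π/4)/z ≤ ((2*π + π/4)*((k:ℝ)+1))/z := (div_le_div_iff_of_pos_right hz).2 h1
      have h3 : ((2*π + π/4)*((k:ℝ)+1))/z = ((2*π + π/4)/z) * ((k:ℝ)+1) := by ring
      simp only
      rw [h3] at h2
      have h4 : (0:ℝ) ≤ (2*π + π/4)/z := by positivity
      nlinarith
    have hpos : (0:ℝ) < 1 + b k := by
      have : (0:ℝ) ≤ b k := by rw [hb]; positivity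
      linarith
    have h3 : (M * ((k:ℝ)+1))^(-δ) ≤ (1 + b k)^(-δ) :=
      Real.rpow_le_rpow_of_nonpos hpos hbk (by linarith)
    have h4 : (M * ((k:ℝ)+1))^(-δ) = M^(-δ) * ((k:ℝ)+1)^(-δ) :=
      Real.mul_rpow (by positivity) (by positivity)
    have h5 : M^δ * (M^(-δ) * ((k:ℝ)+1)^(-δ)) = ((k:ℝ)+1)^(-δ) := by
      rw [← mul_assoc, ← Real.rpow_add hM0]
      norm_num
    calc ((k:ℝ)+1)^(-δ) = M^δ * (M * ((k:ℝ)+1))^(-δ) := by rw [h4, h5]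
      _ ≤ M^δ * (1 + b k)^(-δ) := by
          have : (0:ℝ) < M^δ := Real.rpow_pos_of_pos hM0 δ
          nlinarith [h3]
  have hsum2 : Summable (fun k : ℕ => ((k:ℝ)+1)^(-δ)) :=
    Summable.of_nonneg_of_le (fun k => by positivity) hbound (hsum.mul_left (M^δ))
  have hsum3 : Summable (fun n : ℕ => ((n:ℝ))^(-δ)) := by
    rw [← summable_nat_add_iff 1]
    exact hsum2.congr (fun k => by rw [Nat.cast_succ])
  have : Summable (fun n : ℕ => ((n:ℝ)^δ)⁻¹) := by
    convert hsum3 using 2 with n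
    rw [← Real.rpow_neg (Nat.cast_nonneg n)]
  have := Real.summable_nat_rpow_inv.mp this
  linarith

lemma cauchySD_one_eq {α δ : ℝ} (lam : ℝ) {z : ℝ} (hz : 0 < z) :
    cauchySD 1 α δ lam z
      = Real.sqrt 2 / π * ∫ r in Ioi (0:ℝ),
          Real.cos (r*z) * (1 + (r/(α*lam))^δ)^(-lam) := by
  rw [cauchySD]
  have hEq : ∀ r ∈ Ioi (0:ℝ),
      besselJ (((1:ℕ):ℝ)/2 - 1) (r*z) * r ^ (((1:ℕ):ℝ)/2) * (1 + (r/(α*lam))^δ)^(-lam)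
      = ((z/2)^(-(1/2):ℝ) / Real.sqrt π) *
          (Real.cos (r*z) * (1 + (r/(α*lam))^δ)^(-lam)) := by
    intro r hr
    rw [mem_Ioi] at hr
    have hrz : 0 < r * z := mul_pos hr hz
    rw [show ((1:ℕ):ℝ)/2 - 1 = -(1/2) by norm_num, besselJ_neg_half hrz]
    have hsplit : (r*z/2) ^ (-(1/2):ℝ) = r ^ (-(1/2):ℝ) * (z/2)^(-(1/2):ℝ) := by
      rw [show r*z/2 = r * (z/2) by ring, Real.mul_rpow (le_of_lt hr) (by positivity)]
    have hrr : r ^ (-(1/2):ℝ) * r ^ (((1:ℕ):ℝ)/2) = 1 := by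
      rw [← Real.rpow_add hr]
      norm_num
    calc (r*z/2) ^ (-(1/2):ℝ) / Real.sqrt π * Real.cos (r*z) * r ^ (((1:ℕ):ℝ)/2) *
          (1 + (r/(α*lam))^δ)^(-lam)
        = (r ^ (-(1/2):ℝ) * r ^ (((1:ℕ):ℝ)/2)) * ((z/2)^(-(1/2):ℝ) / Real.sqrt π) *
            Real.cos (r*z) * (1 + (r/(α*lam))^δ)^(-lam) := by
          rw [hsplit]; ring
      _ = ((z/2)^(-(1/2):ℝ) / Real.sqrt π) *
            (Real.cos (r*z) * (1 + (r/(α*lam))^δ)^(-lam)) := by rw [hrr]; ring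
  rw [setIntegral_congr_fun measurableSet_Ioi hEq, MeasureTheory.integral_const_mul]
  have hconst : z ^ (1 - ((1:ℕ):ℝ)/2) / π ^ (((1:ℕ):ℝ)/2) * ((z/2)^(-(1/2):ℝ) / Real.sqrt π)
      = Real.sqrt 2 / π := by
    rw [show (1 : ℝ) - ((1:ℕ):ℝ)/2 = 1/2 by norm_num, show (((1:ℕ):ℝ))/2 = (1/2 : ℝ) by norm_num]
    rw [← Real.sqrt_eq_rpow, ← Real.sqrt_eq_rpow,
      Real.rpow_neg (by positivity), ← Real.sqrt_eq_rpow]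
    rw [show z/2 = z/2 from rfl]
    have h1 : Real.sqrt (z/2) = Real.sqrt z / Real.sqrt 2 := Real.sqrt_div hz.le 2
    rw [h1]
    have hsz : Real.sqrt z ≠ 0 := by positivity
    have hsπ : Real.sqrt π ≠ 0 := by positivity
    have hs2 : Real.sqrt 2 ≠ 0 := by positivity
    have hππ : Real.sqrt π * Real.sqrt π = π := Real.mul_self_sqrt Real.pi_pos.le
    have hπ0 : π ≠ 0 := Real.pi_ne_zero
    field_simp
    linear_combination (-1 : ℝ) * hππ
  rw [← mul_assoc, hconst]

noncomputable def auxG (α δ : ℝ) (t : ℕ) (r : ℝ) : ℝ := (1 + (r/(α*(t:ℝ)))^δ)^(-(t:ℝ))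

noncomputable def auxJ (α δ z : ℝ) (t : ℕ) : ℝ :=
  ∫ r in Ioi (0:ℝ), Real.cos (r*z) * auxG α δ t r

noncomputable def auxB (α δ : ℝ) (t : ℕ) : ℝ :=
  α * (t:ℝ)^(1-1/δ) * (Real.Gamma ((t:ℝ) - 1/δ) * (t:ℝ)^(1/δ) / Real.Gamma (t:ℝ))

theorem cauchy_criterion_bound (d : ℕ) (hd : d = 1 ∨ d = 2) (α δ : ℝ) (hα : 0 < α)
    (hδ : δ ∈ Set.Ioo ((d : ℝ) / 2) 1) (lamseq : ℕ → ℕ) (hmono : StrictMono lamseq)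
    (htop : Tendsto lamseq atTop atTop) (m n : ℕ) :
    ∀ z : ℝ, 0 < z →
      |cauchySD d α δ (lamseq m) z - cauchySD d α δ (lamseq n) z| ≤
        Real.Gamma ((d : ℝ) / δ) /
            (δ * π ^ ((d : ℝ) / 2) * 2 ^ ((d : ℝ) / 2 - 1) * Real.Gamma ((d : ℝ) / 2)) *
          |α ^ d * (lamseq m : ℝ) ^ ((d : ℝ) - (d : ℝ) / δ) *
              (Real.Gamma ((lamseq m : ℝ) - (d : ℝ) / δ) * (lamseq m : ℝ) ^ ((d : ℝ) / δ) /
                Real.Gamma (lamseq m : ℝ)) -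
            α ^ d * (lamseq n : ℝ) ^ ((d : ℝ) - (d : ℝ) / δ) *
              (Real.Gamma ((lamseq n : ℝ) - (d : ℝ) / δ) * (lamseq n : ℝ) ^ ((d : ℝ) / δ) /
                Real.Gamma (lamseq n : ℝ))| := by
  intro z hz
  rcases hd with hd | hd
  swap
  · exfalso
    rw [hd] at hδ
    simp only [mem_Ioo] at hδ
    have h1 := hδ.1
    have h2 := hδ.2
    norm_num at h1
    linarith
  subst hd
  simp only [mem_Ioo] at hδ
  obtain ⟨hδl', hδu⟩ := hδ
  have hδl : 1/2 < δ := by norm_num at hδl'; linarith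
  have hδ0 : 0 < δ := by linarith
  have hδ2 : 1/δ < 2 := by rw [div_lt_iff₀ hδ0]; linarith
  have hδ1 : 1 < 1/δ := by rw [lt_div_iff₀ hδ0]; linarith
  have hΓδ : 0 < Real.Gamma (1/δ) := Real.Gamma_pos_of_pos (by positivity)
  have hπ := Real.pi_pos
  -- rewrite the claim
  have hSD : ∀ t : ℕ, cauchySD 1 α δ t z = Real.sqrt 2 / π * auxJ α δ z t := by
    intro t
    rw [cauchySD_one_eq (t:ℝ) hz, auxJ]
    congr 1
  -- integral value for t ≥ 2
  have hGint : ∀ t : ℕ, 2 ≤ t → IntegrableOn (auxG α δ t) (Ioi 0) volume ∧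
      ∫ r in Ioi (0:ℝ), auxG α δ t r = Real.Gamma (1/δ)/δ * auxB α δ t := by
    intro t ht
    have htR : (2:ℝ) ≤ (t:ℝ) := by exact_mod_cast ht
    have ht0 : (0:ℝ) < t := by linarith
    have hc : 0 < α * (t:ℝ) := by positivity
    have hlam : 1/δ < (t:ℝ) := by linarith
    obtain ⟨hi, hv⟩ := G_int (c := α*(t:ℝ)) (δ := δ) (lam := (t:ℝ)) hc hδ0 hlam
    constructor
    · exact hi
    · simp only [auxG]
      rw [hv, auxB]
      have hsp : (t:ℝ)^((1:ℝ)-1/δ) * (t:ℝ)^(1/δ) = (t:ℝ) := by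
        rw [← Real.rpow_add ht0]
        norm_num
      rw [show α * (t:ℝ)^((1:ℝ)-1/δ) * (Real.Gamma ((t:ℝ)-1/δ) * (t:ℝ)^(1/δ) / Real.Gamma (t:ℝ))
          = α * ((t:ℝ)^((1:ℝ)-1/δ) * (t:ℝ)^(1/δ)) * Real.Gamma ((t:ℝ)-1/δ) / Real.Gamma (t:ℝ) by
            ring]
      rw [hsp]
      ring
  -- measurability of the cos integrand
  have hmeas : ∀ t : ℕ, 1 ≤ t → AEStronglyMeasurable (fun r => Real.cos (r*z) * auxG α δ t r)
      (volume.restrict (Ioi 0)) := by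
    intro t ht1
    have ht0 : (0:ℝ) < (t:ℝ) := by exact_mod_cast ht1
    have hct : ContinuousOn (fun r : ℝ => auxG α δ t r) (Ioi 0) := by
      intro r hr
      rw [mem_Ioi] at hr
      have hin : ContinuousAt (fun r : ℝ => 1 + (r/(α*(t:ℝ)))^δ) r := by
        apply ContinuousAt.add continuousAt_const
        exact ContinuousAt.rpow_const ((continuous_id.div_const _).continuousAt)
          (Or.inr hδ0.le)
      have hb : (0:ℝ) < 1 + (r/(α*(t:ℝ)))^δ := by
        have : 0 < (r/(α*(t:ℝ)))^δ :=
          Real.rpow_pos_of_pos (div_pos hr (by positivity)) δ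
        linarith
      apply ContinuousAt.continuousWithinAt
      exact ContinuousAt.rpow_const hin (Or.inl (ne_of_gt hb))
    exact ((Real.continuous_cos.comp
      (continuous_id.mul continuous_const)).continuousOn.mul hct).aestronglyMeasurable
      measurableSet_Ioi
  have hJint : ∀ t : ℕ, 2 ≤ t →
      IntegrableOn (fun r => Real.cos (r*z) * auxG α δ t r) (Ioi 0) volume := by
    intro t ht
    obtain ⟨hi, _⟩ := hGint t ht
    refine MeasureTheory.Integrable.mono hi (hmeas t (by omega))
      (Filter.Eventually.of_forall (fun r => ?_))
    rw [Real.norm_eq_abs, Real.norm_eq_abs, abs_mul]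
    calc |Real.cos (r*z)| * |auxG α δ t r| ≤ 1 * |auxG α δ t r| :=
          mul_le_mul_of_nonneg_right (abs_cos_le_one _) (abs_nonneg _)
      _ = |auxG α δ t r| := one_mul _
  -- |J| ≤ value for t ≥ 2
  have hGpos : ∀ t : ℕ, ∀ r : ℝ, 0 < r → 0 < auxG α δ t r := by
    intro t r hr
    rw [auxG]
    apply Real.rpow_pos_of_pos
    rcases Nat.eq_zero_or_pos t with h0 | hpos
    · subst h0
      simp only [Nat.cast_zero, mul_zero, div_zero]
      rw [Real.zero_rpow (ne_of_gt hδ0)]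
      norm_num
    · have : (0:ℝ) < (t:ℝ) := by exact_mod_cast hpos
      have h2 : 0 < (r/(α*(t:ℝ)))^δ := Real.rpow_pos_of_pos (div_pos hr (by positivity)) δ
      linarith
  have hJabs : ∀ t : ℕ, 2 ≤ t → |auxJ α δ z t| ≤ Real.Gamma (1/δ)/δ * auxB α δ t := by
    intro t ht
    obtain ⟨hi, hv⟩ := hGint t ht
    rw [auxJ, ← hv]
    have h1 := norm_integral_le_integral_norm
        (μ := volume.restrict (Ioi 0)) (f := fun r => Real.cos (r*z) * auxG α δ t r)
    simp only [Real.norm_eq_abs] at h1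
    refine h1.trans (setIntegral_mono_on ((hJint t ht).abs) hi measurableSet_Ioi ?_)
    intro r hr
    rw [mem_Ioi] at hr
    have hg := hGpos t r hr
    rw [abs_mul, abs_of_pos hg]
    exact mul_le_of_le_one_left hg.le (abs_cos_le_one _)
  -- sign facts
  have hBpos : ∀ t : ℕ, 2 ≤ t → 0 ≤ auxB α δ t := by
    intro t ht
    have htR : (2:ℝ) ≤ (t:ℝ) := by exact_mod_cast ht
    have ht0 : (0:ℝ) < t := by linarith
    rw [auxB]
    have h1 : 0 < Real.Gamma ((t:ℝ) - 1/δ) := Real.Gamma_pos_of_pos (by linarith)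
    have h2 : 0 < Real.Gamma (t:ℝ) := Real.Gamma_pos_of_pos ht0
    positivity
  have hJ0 : ∀ t : ℕ, t ≤ 1 → auxJ α δ z t = 0 := by
    intro t ht
    rw [auxJ]
    apply MeasureTheory.integral_undef
    interval_cases t
    · apply not_int_cos hz hδ0 hδu (by norm_num : (0:ℝ) < 1)
      intro r hr
      rw [mem_Ioi] at hr
      have hG0 : auxG α δ 0 r = 1 := by
        rw [auxG]
        simp only [Nat.cast_zero, neg_zero, Real.rpow_zero]
      rw [hG0, one_mul]
      exact Real.rpow_le_one_of_one_le_of_nonpos (by linarith) (by linarith)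
    · have hαδ : 0 < α^(-δ) := Real.rpow_pos_of_pos hα _
      have hc0 : (0:ℝ) < (1+α^(-δ))⁻¹ := by positivity
      apply not_int_cos hz hδ0 hδu hc0
      intro r hr
      rw [mem_Ioi] at hr
      have hP : (0:ℝ) < 1 + (r/(α*1))^δ := by
        have : 0 < (r/(α*1))^δ := Real.rpow_pos_of_pos (div_pos hr (by linarith)) δ
        linarith
      have hPQ : 1 + (r/(α*1))^δ ≤ (1+α^(-δ)) * (1+r)^δ := by
        have e1 : (r/(α*1))^δ = r^δ * α^(-δ) := by
          rw [mul_one, Real.div_rpow hr.le hα.le, Real.rpow_neg hα.le, div_eq_mul_inv]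
        have e2 : r^δ ≤ (1+r)^δ := Real.rpow_le_rpow hr.le (by linarith) hδ0.le
        have e3 : (1:ℝ) ≤ (1+r)^δ := Real.one_le_rpow (by linarith) hδ0.le
        rw [e1]
        nlinarith
      have hG1 : auxG α δ 1 r = (1 + (r/(α*1))^δ)⁻¹ := by
        rw [auxG]
        simp only [Nat.cast_one]
        rw [show -(1:ℝ) = ((-1:ℝ)) by norm_num, Real.rpow_neg_one]
      rw [hG1]
      have hkey : (1+α^(-δ))⁻¹ * (1+r)^(-δ) = ((1+α^(-δ)) * (1+r)^δ)⁻¹ := by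
        rw [Real.rpow_neg (by linarith : (0:ℝ) ≤ 1+r), mul_inv]
      rw [hkey]
      exact inv_anti₀ hP hPQ
  have hBnonpos : ∀ t : ℕ, t ≤ 1 → auxB α δ t ≤ 0 := by
    intro t ht
    interval_cases t
    · rw [auxB]
      simp only [Nat.cast_zero]
      rw [Real.zero_rpow (ne_of_lt (by linarith : (1:ℝ) - 1/δ < 0))]
      simp
    · rw [auxB]
      simp only [Nat.cast_one]
      rw [Real.one_rpow, Real.one_rpow, Real.Gamma_one]
      have hx : (1:ℝ) - 1/δ < 0 := by linarith
      have hΓ : Real.Gamma ((1:ℝ) - 1/δ) ≤ 0 := by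
        by_contra hcon
        push_neg at hcon
        have hmul : ((1:ℝ) - 1/δ) * Real.Gamma ((1:ℝ) - 1/δ) < 0 :=
          mul_neg_of_neg_of_pos hx hcon
        have h := Real.Gamma_add_one (ne_of_lt hx)
        have hpos : 0 < Real.Gamma ((1:ℝ) - 1/δ + 1) :=
          Real.Gamma_pos_of_pos (by linarith)
        rw [h] at hpos
        linarith
      nlinarith
  -- monotonicity
  have hGmono : ∀ p q : ℕ, 1 ≤ q → q ≤ p → ∀ r : ℝ, 0 < r →
      auxG α δ p r ≤ auxG α δ q r := by
    intro p q hq hpq r hr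
    have hq0 : (0:ℝ) < (q:ℝ) := by exact_mod_cast lt_of_lt_of_le zero_lt_one hq
    have hpq' : (q:ℝ) ≤ (p:ℝ) := by exact_mod_cast hpq
    exact G_mono hα hδ0 hδu.le hr hq0 hpq'
  -- the symmetric main claim
  have main : ∀ p q : ℕ, q ≤ p →
      |Real.sqrt 2/π * auxJ α δ z p - Real.sqrt 2/π * auxJ α δ z q| ≤
        Real.sqrt 2 * Real.Gamma (1/δ) / (δ * π) * |auxB α δ p - auxB α δ q| := by
    intro p q hpq
    rw [show Real.sqrt 2/π * auxJ α δ z p - Real.sqrt 2/π * auxJ α δ z q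
        = Real.sqrt 2/π * (auxJ α δ z p - auxJ α δ z q) by ring,
      abs_mul, abs_of_pos (by positivity : (0:ℝ) < Real.sqrt 2/π)]
    rcases le_or_gt 2 q with hq2 | hq1
    · -- both ≥ 2
      have hp2 : 2 ≤ p := le_trans hq2 hpq
      obtain ⟨hiq, hvq⟩ := hGint q hq2
      obtain ⟨hip, hvp⟩ := hGint p hp2
      have hintp := hJint p hp2
      have hintq := hJint q hq2
      have hptw : ∀ r ∈ Ioi (0:ℝ),
          |Real.cos (r*z) * auxG α δ p r - Real.cos (r*z) * auxG α δ q r|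
            ≤ auxG α δ q r - auxG α δ p r := by
        intro r hr
        rw [mem_Ioi] at hr
        have hm := hGmono p q (by omega) hpq r hr
        rw [show Real.cos (r*z) * auxG α δ p r - Real.cos (r*z) * auxG α δ q r
            = Real.cos (r*z) * (auxG α δ p r - auxG α δ q r) by ring, abs_mul]
        have h1 : |auxG α δ p r - auxG α δ q r| = auxG α δ q r - auxG α δ p r := by
          rw [abs_sub_comm, abs_of_nonneg (by linarith)]
        rw [h1]
        exact mul_le_of_le_one_left (by linarith) (abs_cos_le_one _)
      have hdiff : |auxJ α δ z p - auxJ α δ z q|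
          ≤ (∫ r in Ioi (0:ℝ), auxG α δ q r) - ∫ r in Ioi (0:ℝ), auxG α δ p r := by
        rw [auxJ, auxJ, ← MeasureTheory.integral_sub hintp hintq]
        have habs := norm_integral_le_integral_norm
            (μ := volume.restrict (Ioi 0))
            (f := fun r => Real.cos (r*z) * auxG α δ p r - Real.cos (r*z) * auxG α δ q r)
        simp only [Real.norm_eq_abs] at habs
        refine habs.trans ?_
        rw [← MeasureTheory.integral_sub hiq hip]
        exact setIntegral_mono_on (hintp.sub hintq).abs (hiq.sub hip) measurableSet_Ioi hptw
      rw [hvp, hvq] at hdiff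
      have hΓδ' : (0:ℝ) < Real.Gamma (1/δ)/δ := by positivity
      have h0 : 0 ≤ Real.Gamma (1/δ)/δ * auxB α δ q - Real.Gamma (1/δ)/δ * auxB α δ p :=
        le_trans (abs_nonneg _) hdiff
      have h0' : Real.Gamma (1/δ)/δ * 0 ≤ Real.Gamma (1/δ)/δ * (auxB α δ q - auxB α δ p) := by
        rw [mul_sub, mul_zero]
        linarith
      have hqp : 0 ≤ auxB α δ q - auxB α δ p := le_of_mul_le_mul_left h0' hΓδ'
      have hBd : |auxB α δ p - auxB α δ q| = auxB α δ q - auxB α δ p := by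
        rw [abs_sub_comm]
        exact abs_of_nonneg hqp
      rw [hBd]
      calc Real.sqrt 2/π * |auxJ α δ z p - auxJ α δ z q|
          ≤ Real.sqrt 2/π * (Real.Gamma (1/δ)/δ * auxB α δ q - Real.Gamma (1/δ)/δ * auxB α δ p) :=
            mul_le_mul_of_nonneg_left hdiff (by positivity)
        _ = Real.sqrt 2 * Real.Gamma (1/δ)/(δ*π) * (auxB α δ q - auxB α δ p) := by
            field_simp
    · -- q ≤ 1
      have hq1' : q ≤ 1 := by omega
      rw [hJ0 q hq1', sub_zero]
      rcases le_or_gt 2 p with hp2 | hp1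
      · have hJp := hJabs p hp2
        have hBq := hBnonpos q hq1'
        have hBp := hBpos p hp2
        have hBd : |auxB α δ p - auxB α δ q| = auxB α δ p - auxB α δ q :=
          abs_of_nonneg (by linarith)
        rw [hBd]
        have hpos : (0:ℝ) < Real.sqrt 2/π := by positivity
        have h3 : (0:ℝ) < Real.Gamma (1/δ)/δ := by positivity
        calc Real.sqrt 2/π * |auxJ α δ z p|
            ≤ Real.sqrt 2/π * (Real.Gamma (1/δ)/δ * auxB α δ p) :=
              mul_le_mul_of_nonneg_left hJp hpos.le
          _ ≤ Real.sqrt 2/π * (Real.Gamma (1/δ)/δ * (auxB α δ p - auxB α δ q)) :=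
              mul_le_mul_of_nonneg_left
                (mul_le_mul_of_nonneg_left (by linarith) h3.le) hpos.le
          _ = Real.sqrt 2 * Real.Gamma (1/δ)/(δ*π) * (auxB α δ p - auxB α δ q) := by
              field_simp
      · have hp1' : p ≤ 1 := by omega
        rw [hJ0 p hp1', abs_zero, mul_zero]
        exact mul_nonneg (div_nonneg (mul_nonneg (Real.sqrt_nonneg 2) hΓδ.le)
          (by positivity)) (abs_nonneg _)
  -- finish
  simp only [Nat.cast_one, pow_one]
  rw [hSD (lamseq m), hSD (lamseq n)]
  have hK : Real.Gamma (1/δ) / (δ * π ^ ((1:ℝ)/2) * 2 ^ ((1:ℝ)/2 - 1) * Real.Gamma ((1:ℝ)/2))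
      = Real.sqrt 2 * Real.Gamma (1/δ) / (δ * π) := by
    rw [show ((1:ℝ)/2 - 1) = -(1/2) by norm_num,
      Real.rpow_neg (by norm_num : (0:ℝ) ≤ 2), ← Real.sqrt_eq_rpow, ← Real.sqrt_eq_rpow,
      Real.Gamma_one_half_eq]
    have hππ := Real.mul_self_sqrt Real.pi_pos.le
    have h2 : Real.sqrt 2 ≠ 0 := by positivity
    have hπ' : Real.sqrt π ≠ 0 := by positivity
    have hden : δ * Real.sqrt π * (Real.sqrt 2)⁻¹ * Real.sqrt π = δ * π / Real.sqrt 2 := by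
      field_simp
      linear_combination hππ
    rw [hden, div_div_eq_mul_div]
    ring
  rw [hK]
  have e : ∀ t : ℕ, α * (t:ℝ)^(1-1/δ) *
      (Real.Gamma ((t:ℝ) - 1/δ) * (t:ℝ)^(1/δ) / Real.Gamma (t:ℝ)) = auxB α δ t :=
    fun t => rfl
  rw [e (lamseq m), e (lamseq n)]
  rcases le_total (lamseq n) (lamseq m) with h | h
  · exact main (lamseq m) (lamseq n) h
  · rw [abs_sub_comm (Real.sqrt 2/π * auxJ α δ z (lamseq m)),
      abs_sub_comm (auxB α δ (lamseq m))]
    exact main (lamseq n) (lamseq m) h
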